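/- Among all set functions α : 2^[n] → L that disjunctively define a given weighted lattice polynomial function p (i.e., p(x) = ⋁_{S}(α(S) ∧ ⋀_{i∈S} x_i)), exactly one is nondecreasing, namely α(S) = p(e_S). -/

import Mathlib

open Finset MeasureTheory ProbabilityTheory

/-- Weighted lattice polynomial functions on the interval L = [a,b] ⊆ ℝ:
built inductively from projections, constants in [a,b], pointwise min and max. -/
inductive IsWLP (a b : ℝ) (n : ℕ) : ((Fin n → ℝ) → ℝ) → Prop
  | proj (k : Fin n) : IsWLP a b n (fun x => x k)
  | const (c : ℝ) (hc : c ∈ Set.Icc a b) : IsWLP a b n (fun _ => c)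
  | inf {p q} : IsWLP a b n p → IsWLP a b n q → IsWLP a b n (fun x => min (p x) (q x))
  | sup {p q} : IsWLP a b n p → IsWLP a b n q → IsWLP a b n (fun x => max (p x) (q x))

/-- The characteristic vector e_S of S ⊆ [n] in {a,b}^n. -/
def charVec (a b : ℝ) {n : ℕ} (S : Finset (Fin n)) : Fin n → ℝ := fun i => if i ∈ S then b else a

/- Auxiliary lemmas -/

lemma wlp_mono {a b : ℝ} {n : ℕ} {p : (Fin n → ℝ) → ℝ} (hp : IsWLP a b n p) :
    ∀ x y : Fin n → ℝ, (∀ i, x i ≤ y i) → p x ≤ p y := by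
  induction hp with
  | proj k => exact fun x y h => h k
  | const c hc => exact fun x y h => le_refl c
  | inf hp hq ihp ihq => exact fun x y h => min_le_min (ihp x y h) (ihq x y h)
  | sup hp hq ihp ihq => exact fun x y h => max_le_max (ihp x y h) (ihq x y h)

lemma wlp_mem {a b : ℝ} {n : ℕ} {p : (Fin n → ℝ) → ℝ} (hp : IsWLP a b n p) :
    ∀ x : Fin n → ℝ, (∀ i, x i ∈ Set.Icc a b) → p x ∈ Set.Icc a b := by
  induction hp with
  | proj k => exact fun x hx => hx k
  | const c hc => exact fun x hx => hc
  | inf hp hq ihp ihq =>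
      intro x hx
      exact ⟨le_min (ihp x hx).1 (ihq x hx).1, min_le_of_left_le (ihp x hx).2⟩
  | sup hp hq ihp ihq =>
      intro x hx
      exact ⟨le_max_of_le_left (ihp x hx).1, max_le (ihp x hx).2 (ihq x hx).2⟩

lemma charVec_mem {a b : ℝ} (hab : a ≤ b) {n : ℕ} (S : Finset (Fin n)) (i : Fin n) :
    charVec a b S i ∈ Set.Icc a b := by
  unfold charVec
  split
  · exact ⟨hab, le_rfl⟩
  · exact ⟨le_rfl, hab⟩

lemma charVec_mono {a b : ℝ} (hab : a ≤ b) {n : ℕ} {S T : Finset (Fin n)} (hST : S ⊆ T)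
    (i : Fin n) : charVec a b S i ≤ charVec a b T i := by
  unfold charVec
  by_cases h : i ∈ S
  · simp [h, hST h]
  · rw [if_neg h]
    split
    · exact hab
    · exact le_rfl

lemma fold_min_le_base {n : ℕ} (b : ℝ) (x : Fin n → ℝ) (S : Finset (Fin n)) :
    S.fold min b x ≤ b := by
  induction S using Finset.induction_on with
  | empty => simp
  | insert _ _ hi ih => rw [Finset.fold_insert hi]; exact le_trans (min_le_right _ _) ih

lemma fold_min_le_mem {n : ℕ} (b : ℝ) (x : Fin n → ℝ) {S : Finset (Fin n)} {i : Fin n}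
    (hi : i ∈ S) : S.fold min b x ≤ x i := by
  induction S using Finset.induction_on with
  | empty => simp at hi
  | @insert j T hj ih =>
      rw [Finset.fold_insert hj]
      rcases Finset.mem_insert.mp hi with h | h
      · subst h; exact min_le_left _ _
      · exact le_trans (min_le_right _ _) (ih h)

lemma le_fold_min {n : ℕ} {b c : ℝ} {x : Fin n → ℝ} {S : Finset (Fin n)}
    (hb : c ≤ b) (h : ∀ i ∈ S, c ≤ x i) : c ≤ S.fold min b x := by
  induction S using Finset.induction_on with
  | empty => simpa
  | @insert j T hj ih =>
      rw [Finset.fold_insert hj]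
      exact le_min (h j (Finset.mem_insert_self j T))
        (ih fun i hi => h i (Finset.mem_insert_of_mem hi))

lemma fold_charVec {a b : ℝ} (hab : a ≤ b) {n : ℕ} (S T : Finset (Fin n)) :
    T.fold min b (charVec a b S) = if T ⊆ S then b else a := by
  split
  · next h =>
      refine le_antisymm (fold_min_le_base _ _ _) (le_fold_min le_rfl ?_)
      intro i hi
      simp [charVec, h hi]
  · next h =>
      obtain ⟨i, hiT, hiS⟩ := Finset.not_subset.mp h
      refine le_antisymm ?_ (le_fold_min hab ?_)
      · calc T.fold min b (charVec a b S) ≤ charVec a b S i := fold_min_le_mem _ _ hiT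
          _ = a := by simp [charVec, hiS]
      · intro j _
        exact (charVec_mem hab S j).1

lemma wlp_rep {a b : ℝ} (hab : a ≤ b) {n : ℕ} {p : (Fin n → ℝ) → ℝ} (hp : IsWLP a b n p) :
    ∀ x : Fin n → ℝ, (∀ i, x i ∈ Set.Icc a b) →
      p x = (Finset.univ (α := Fin n)).powerset.sup' (Finset.powerset_nonempty _)
        (fun S => min (p (charVec a b S)) (S.fold min b x)) := by
  induction hp with
  | proj k =>
      intro x hx
      dsimp only
      apply le_antisymm
      · have h2 : min (charVec a b {k} k) (({k} : Finset (Fin n)).fold min b x) = x k := by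
          rw [Finset.fold_singleton, min_eq_left (hx k).2]
          simp [charVec, min_eq_right (hx k).2]
        exact le_trans (le_of_eq h2.symm)
          (Finset.le_sup' (fun S => min (charVec a b S k) (S.fold min b x))
            (Finset.mem_powerset.mpr (Finset.subset_univ {k})))
      · apply Finset.sup'_le
        intro S _
        by_cases hk : k ∈ S
        · exact le_trans (min_le_right _ _) (fold_min_le_mem _ _ hk)
        · refine le_trans (min_le_left _ _) ?_
          have : charVec a b S k = a := by simp [charVec, hk]
          rw [this]; exact (hx k).1
  | const c hc =>
      intro x hx
      dsimp only
      apply le_antisymm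
      · have h2 : min c ((∅ : Finset (Fin n)).fold min b x) = c := by
          rw [Finset.fold_empty, min_eq_left hc.2]
        exact le_trans (le_of_eq h2.symm)
          (Finset.le_sup' (fun S => min c (S.fold min b x))
            (Finset.mem_powerset.mpr (Finset.empty_subset _)))
      · exact Finset.sup'_le _ _ fun S _ => min_le_left _ _
  | @inf q r hq hr ihq ihr =>
      intro x hx
      dsimp only
      apply le_antisymm
      · obtain ⟨S, hS, hSeq⟩ := Finset.exists_mem_eq_sup' (Finset.powerset_nonempty
          (Finset.univ (α := Fin n))) (fun S => min (q (charVec a b S)) (S.fold min b x))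
        obtain ⟨T, hT, hTeq⟩ := Finset.exists_mem_eq_sup' (Finset.powerset_nonempty
          (Finset.univ (α := Fin n))) (fun S => min (r (charVec a b S)) (S.fold min b x))
        have hqx : q x = min (q (charVec a b S)) (S.fold min b x) := (ihq x hx).trans hSeq
        have hrx : r x = min (r (charVec a b T)) (T.fold min b x) := (ihr x hx).trans hTeq
        refine le_trans (le_min (le_min ?_ ?_) ?_)
          (Finset.le_sup' (fun S => min (min (q (charVec a b S)) (r (charVec a b S)))
            (S.fold min b x)) (Finset.mem_powerset.mpr (Finset.subset_univ (S ∪ T))))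
        · calc min (q x) (r x) ≤ q x := min_le_left _ _
            _ ≤ q (charVec a b S) := by rw [hqx]; exact min_le_left _ _
            _ ≤ q (charVec a b (S ∪ T)) :=
              wlp_mono hq _ _ (charVec_mono hab Finset.subset_union_left)
        · calc min (q x) (r x) ≤ r x := min_le_right _ _
            _ ≤ r (charVec a b T) := by rw [hrx]; exact min_le_left _ _
            _ ≤ r (charVec a b (S ∪ T)) :=
              wlp_mono hr _ _ (charVec_mono hab Finset.subset_union_right)
        · refine le_fold_min (min_le_of_left_le (wlp_mem hq x hx).2) ?_
          intro i hi
          rcases Finset.mem_union.mp hi with h | h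
          · calc min (q x) (r x) ≤ q x := min_le_left _ _
              _ ≤ S.fold min b x := by rw [hqx]; exact min_le_right _ _
              _ ≤ x i := fold_min_le_mem _ _ h
          · calc min (q x) (r x) ≤ r x := min_le_right _ _
              _ ≤ T.fold min b x := by rw [hrx]; exact min_le_right _ _
              _ ≤ x i := fold_min_le_mem _ _ h
      · apply Finset.sup'_le
        intro S hS
        refine le_min ?_ ?_
        · calc min (min (q (charVec a b S)) (r (charVec a b S))) (S.fold min b x)
              ≤ min (q (charVec a b S)) (S.fold min b x) :=
                min_le_min (min_le_left _ _) le_rfl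
            _ ≤ q x := by
                rw [ihq x hx]
                exact Finset.le_sup' (fun S => min (q (charVec a b S)) (S.fold min b x)) hS
        · calc min (min (q (charVec a b S)) (r (charVec a b S))) (S.fold min b x)
              ≤ min (r (charVec a b S)) (S.fold min b x) :=
                min_le_min (min_le_right _ _) le_rfl
            _ ≤ r x := by
                rw [ihr x hx]
                exact Finset.le_sup' (fun S => min (r (charVec a b S)) (S.fold min b x)) hS
  | @sup q r hq hr ihq ihr =>
      intro x hx
      dsimp only
      apply le_antisymm
      · have key : ∀ (s : (Fin n → ℝ) → ℝ),
            (s x = (Finset.univ (α := Fin n)).powerset.sup' (Finset.powerset_nonempty _)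
              (fun S => min (s (charVec a b S)) (S.fold min b x))) →
            (∀ S, s (charVec a b S) ≤ max (q (charVec a b S)) (r (charVec a b S))) →
            s x ≤ (Finset.univ (α := Fin n)).powerset.sup' (Finset.powerset_nonempty _)
              (fun S => min (max (q (charVec a b S)) (r (charVec a b S))) (S.fold min b x)) := by
          intro s hrep hle
          rw [hrep]
          apply Finset.sup'_le
          intro S hS
          exact le_trans (min_le_min (hle S) le_rfl)
            (Finset.le_sup' (fun S => min (max (q (charVec a b S)) (r (charVec a b S)))
              (S.fold min b x)) hS)
        rcases max_cases (q x) (r x) with ⟨heq, _⟩ | ⟨heq, _⟩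
        · rw [heq]
          exact key q (ihq x hx) (fun S => le_max_left _ _)
        · rw [heq]
          exact key r (ihr x hx) (fun S => le_max_right _ _)
      · apply Finset.sup'_le
        intro S hS
        rcases le_total (q (charVec a b S)) (r (charVec a b S)) with h | h
        · rw [max_eq_right h]
          calc min (r (charVec a b S)) (S.fold min b x) ≤ r x := by
                rw [ihr x hx]
                exact Finset.le_sup' (fun S => min (r (charVec a b S)) (S.fold min b x)) hS
            _ ≤ max (q x) (r x) := le_max_right _ _
        · rw [max_eq_left h]
          calc min (q (charVec a b S)) (S.fold min b x) ≤ q x := by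
                rw [ihq x hx]
                exact Finset.le_sup' (fun S => min (q (charVec a b S)) (S.fold min b x)) hS
            _ ≤ max (q x) (r x) := le_max_left _ _

/-- From among all set functions disjunctively defining p, exactly one is nondecreasing,
namely S ↦ p(e_S). -/
theorem wlp_unique_nondecreasing_disjunctive (a b : ℝ) (hab : a ≤ b) (n : ℕ)
    (p : (Fin n → ℝ) → ℝ) (hp : IsWLP a b n p) :
    (∀ S, p (charVec a b S) ∈ Set.Icc a b) ∧
    (∀ S T : Finset (Fin n), S ⊆ T → p (charVec a b S) ≤ p (charVec a b T)) ∧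
    (∀ x : Fin n → ℝ, (∀ i, x i ∈ Set.Icc a b) →
      p x = (Finset.univ (α := Fin n)).powerset.sup' (Finset.powerset_nonempty _)
        (fun S => min (p (charVec a b S)) (S.fold min b x))) ∧
    (∀ α : Finset (Fin n) → ℝ, (∀ S, α S ∈ Set.Icc a b) →
      (∀ S T : Finset (Fin n), S ⊆ T → α S ≤ α T) →
      (∀ x : Fin n → ℝ, (∀ i, x i ∈ Set.Icc a b) →
        p x = (Finset.univ (α := Fin n)).powerset.sup' (Finset.powerset_nonempty _)
          (fun S => min (α S) (S.fold min b x))) →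
      ∀ S, α S = p (charVec a b S)) := by
  refine ⟨fun S => wlp_mem hp _ (charVec_mem hab S),
    fun S T hST => wlp_mono hp _ _ (charVec_mono hab hST),
    wlp_rep hab hp, ?_⟩
  intro α hmem hmono hrep S
  rw [hrep (charVec a b S) (charVec_mem hab S)]
  apply le_antisymm
  · have h2 : min (α S) (S.fold min b (charVec a b S)) = α S := by
      rw [fold_charVec hab, if_pos (Finset.Subset.refl S), min_eq_left (hmem S).2]
    exact le_trans (le_of_eq h2.symm)
      (Finset.le_sup' (fun T => min (α T) (T.fold min b (charVec a b S)))
        (Finset.mem_powerset.mpr (Finset.subset_univ S)))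
  · apply Finset.sup'_le
    intro T _
    rw [fold_charVec hab]
    by_cases h : T ⊆ S
    · rw [if_pos h, min_eq_left (hmem T).2]
      exact hmono T S h
    · rw [if_neg h, min_eq_right (hmem T).1]
      exact (hmem S).1
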